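/- Let V : EuclideanSpace ℝ (Fin d) → ℝ be differentiable, let ε > 0, let L ≥ 2, and fix endpoints q⁰ and q^L. Define the discrete action S(q¹, …, q^{L-1}) = ε·∑_{i=0}^{L-1} ( (1/2)·‖(q^{i+1} - qⁱ)/ε‖² - (V(q^{i+1}) + V(qⁱ))/2 ). If the interior path (q¹, …, q^{L-1}) is a local minimum of S (with q⁰ and q^L held fixed), then the leapfrog position recurrence holds at every interior index: q^{i+1} = 2·qⁱ - q^{i-1} - ε² • ∇V(qⁱ) for all i = 1, …, L-1, where ∇V denotes the gradient of V. -/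

import Mathlib

open scoped RealInnerProductSpace


/-- The discrete action of a path `Q` (only indices `0, …, L` are used):
`S(Q) = ε·∑_{i=0}^{L-1} ( (1/2)·‖(Q^{i+1} - Qⁱ)/ε‖² - (V(Q^{i+1}) + V(Qⁱ))/2 )`. -/
noncomputable def discreteAction {d : ℕ} (V : EuclideanSpace ℝ (Fin d) → ℝ) (ε : ℝ) (L : ℕ)
    (Q : ℕ → EuclideanSpace ℝ (Fin d)) : ℝ :=
  ε * ∑ i ∈ Finset.range L,
    ((1 / 2) * ‖(ε⁻¹ : ℝ) • (Q (i + 1) - Q i)‖ ^ 2 - (V (Q (i + 1)) + V (Q i)) / 2)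

/-- The full path obtained from interior points `y : Fin (L-1) → E` with fixed endpoints. -/
noncomputable def extendPath {d : ℕ} (L : ℕ) (q0 qL : EuclideanSpace ℝ (Fin d))
    (y : Fin (L - 1) → EuclideanSpace ℝ (Fin d)) : ℕ → EuclideanSpace ℝ (Fin d) :=
  fun i => if h : 1 ≤ i ∧ i ≤ L - 1 then y ⟨i - 1, by omega⟩
    else if i = 0 then q0 else qL

lemma aux_kin {d : ℕ} (c : ℝ) (a x : EuclideanSpace ℝ (Fin d)) :
    HasFDerivAt (fun x : EuclideanSpace ℝ (Fin d) => (1 / 2) * ‖c • (x - a)‖ ^ 2)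
      ((c ^ 2) • innerSL ℝ (x - a)) x := by
  have h1 : HasFDerivAt (fun x : EuclideanSpace ℝ (Fin d) => x - a)
      (ContinuousLinearMap.id ℝ _) x := (hasFDerivAt_id x).sub_const a
  have h2 := (h1.inner ℝ h1).const_mul (c ^ 2 / 2)
  have heq : (fun x : EuclideanSpace ℝ (Fin d) =>
      (c ^ 2 / 2) * ⟪x - a, x - a⟫) =
      fun x => (1 / 2) * ‖c • (x - a)‖ ^ 2 := by
    funext y
    rw [norm_smul, real_inner_self_eq_norm_sq]
    simp [mul_pow, sq_abs]
    ring
  rw [heq] at h2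
  refine HasFDerivAt.congr_fderiv h2 ?_
  ext v
  simp only [ContinuousLinearMap.smul_apply, ContinuousLinearMap.coe_comp',
    Function.comp_apply, ContinuousLinearMap.prod_apply, ContinuousLinearMap.id_apply,
    fderivInnerCLM_apply, innerSL_apply_apply, smul_eq_mul]
  rw [real_inner_comm v (x - a)]
  ring

theorem stmt_10 (d : ℕ) (V : EuclideanSpace ℝ (Fin d) → ℝ) (hV : Differentiable ℝ V)
    (ε : ℝ) (hε : 0 < ε) (L : ℕ) (hL : 2 ≤ L) (q : ℕ → EuclideanSpace ℝ (Fin d))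
    (hmin : IsLocalMin
      (fun y : Fin (L - 1) → EuclideanSpace ℝ (Fin d) =>
        discreteAction V ε L (extendPath L (q 0) (q L) y))
      (fun j => q (j.1 + 1))) :
    ∀ i : ℕ, 1 ≤ i → i ≤ L - 1 →
      q (i + 1) = (2 : ℝ) • q i - q (i - 1) - ε ^ 2 • gradient V (q i) := by
  intro i hi1 hi2
  have hne : (ε : ℝ) ≠ 0 := ne_of_gt hε
  set y₀ : Fin (L - 1) → EuclideanSpace ℝ (Fin d) := fun j => q (j.1 + 1) with hy₀
  set j : Fin (L - 1) := ⟨i - 1, by omega⟩ with hj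
  set P : EuclideanSpace ℝ (Fin d) → ℕ → EuclideanSpace ℝ (Fin d) :=
    fun x => extendPath L (q 0) (q L) (Function.update y₀ j x) with hPdef
  have hu0 : Function.update y₀ j (q i) = y₀ := by
    have : y₀ j = q i := by
      show q (i - 1 + 1) = q i
      exact congrArg q (by omega)
    rw [← this, Function.update_eq_self]
  have hmin' : IsLocalMin (fun x : EuclideanSpace ℝ (Fin d) =>
      discreteAction V ε L (P x)) (q i) := by
    have hcont : ContinuousAt
        (fun x : EuclideanSpace ℝ (Fin d) => Function.update y₀ j x) (q i) :=
      (continuous_const.update j continuous_id).continuousAt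
    exact IsLocalMin.comp_continuous
      (f := fun y : Fin (L - 1) → EuclideanSpace ℝ (Fin d) =>
        discreteAction V ε L (extendPath L (q 0) (q L) y))
      (g := fun x : EuclideanSpace ℝ (Fin d) => Function.update y₀ j x) (b := q i)
      (by simp only [hu0]; exact hmin) hcont
  have hP : ∀ (x : EuclideanSpace ℝ (Fin d)) (k : ℕ), k ≤ L → k ≠ i → P x k = q k := by
    intro x k hk hki
    show extendPath L (q 0) (q L) (Function.update y₀ j x) k = q k
    unfold extendPath
    split_ifs with h h0
    · rw [Function.update_of_ne (by simp [hj, Fin.ext_iff]; omega)]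
      show q (k - 1 + 1) = q k
      exact congrArg q (by omega)
    · rw [h0]
    · have : k = L := by omega
      rw [this]
  have hPi : ∀ x : EuclideanSpace ℝ (Fin d), P x i = x := by
    intro x
    show extendPath L (q 0) (q L) (Function.update y₀ j x) i = x
    unfold extendPath
    rw [dif_pos ⟨hi1, hi2⟩]
    exact Function.update_self _ _ _
  set Dv : EuclideanSpace ℝ (Fin d) →L[ℝ] ℝ :=
    (InnerProductSpace.toDual ℝ (EuclideanSpace ℝ (Fin d)) (gradient V (q i)) :
      EuclideanSpace ℝ (Fin d) →L[ℝ] ℝ) with hDv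
  have hVf : HasFDerivAt V Dv (q i) := (hV (q i)).hasGradientAt.hasFDerivAt
  set D1 : EuclideanSpace ℝ (Fin d) →L[ℝ] ℝ :=
    ((ε⁻¹ : ℝ) ^ 2) • innerSL ℝ (q i - q (i - 1)) - (1 / 2 : ℝ) • Dv with hD1
  set D2 : EuclideanSpace ℝ (Fin d) →L[ℝ] ℝ :=
    ((ε⁻¹ : ℝ) ^ 2) • innerSL ℝ (q i - q (i + 1)) - (1 / 2 : ℝ) • Dv with hD2
  set D : ℕ → (EuclideanSpace ℝ (Fin d) →L[ℝ] ℝ) :=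
    fun k => if k = i - 1 then D1 else if k = i then D2 else 0 with hD
  have hterm : ∀ k ∈ Finset.range L, HasFDerivAt
      (fun x : EuclideanSpace ℝ (Fin d) =>
        (1 / 2) * ‖(ε⁻¹ : ℝ) • (P x (k + 1) - P x k)‖ ^ 2
        - (V (P x (k + 1)) + V (P x k)) / 2) (D k) (q i) := by
    intro k hk
    rw [Finset.mem_range] at hk
    by_cases h1 : k = i - 1
    · have hki : k + 1 = i := by omega
      have hkne : k ≠ i := by omega
      have heq : (fun x : EuclideanSpace ℝ (Fin d) =>
          (1 / 2) * ‖(ε⁻¹ : ℝ) • (P x (k + 1) - P x k)‖ ^ 2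
          - (V (P x (k + 1)) + V (P x k)) / 2)
          = fun x : EuclideanSpace ℝ (Fin d) =>
            (1 / 2) * ‖(ε⁻¹ : ℝ) • (x - q (i - 1))‖ ^ 2
            - (1 / 2) * (V x + V (q (i - 1))) := by
        funext x
        rw [hki, hPi x, hP x k (by omega) hkne, h1]
        ring
      rw [heq]
      have := (aux_kin (ε⁻¹) (q (i - 1)) (q i)).fun_sub
        ((hVf.add_const (V (q (i - 1)))).const_mul (1 / 2))
      simpa [hD, h1, hD1] using this
    · by_cases h2 : k = i
      · have heq : (fun x : EuclideanSpace ℝ (Fin d) =>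
            (1 / 2) * ‖(ε⁻¹ : ℝ) • (P x (k + 1) - P x k)‖ ^ 2
            - (V (P x (k + 1)) + V (P x k)) / 2)
            = fun x : EuclideanSpace ℝ (Fin d) =>
              (1 / 2) * ‖(ε⁻¹ : ℝ) • (x - q (i + 1))‖ ^ 2
              - (1 / 2) * (V (q (i + 1)) + V x) := by
          funext x
          rw [show k + 1 = i + 1 by omega, hP x (i + 1) (by omega) (by omega), h2, hPi x]
          rw [show ((ε⁻¹ : ℝ) • (q (i + 1) - x)) = -((ε⁻¹ : ℝ) • (x - q (i + 1))) by
            rw [← smul_neg, neg_sub], norm_neg]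
          ring
        rw [heq]
        have := (aux_kin (ε⁻¹) (q (i + 1)) (q i)).fun_sub
          ((hVf.const_add (V (q (i + 1)))).const_mul (1 / 2))
        simpa [hD, h2, hD2, show ¬(i = i - 1) by omega] using this
      · have heq : (fun x : EuclideanSpace ℝ (Fin d) =>
            (1 / 2) * ‖(ε⁻¹ : ℝ) • (P x (k + 1) - P x k)‖ ^ 2
            - (V (P x (k + 1)) + V (P x k)) / 2)
            = fun _ : EuclideanSpace ℝ (Fin d) =>
              (1 / 2) * ‖(ε⁻¹ : ℝ) • (q (k + 1) - q k)‖ ^ 2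
              - (V (q (k + 1)) + V (q k)) / 2 := by
          funext x
          rw [hP x (k + 1) (by omega) (by omega), hP x k (by omega) h2]
        rw [heq]
        have hDk : D k = 0 := by simp [hD, h1, h2]
        rw [hDk]
        exact hasFDerivAt_const
          ((1 / 2) * ‖(ε⁻¹ : ℝ) • (q (k + 1) - q k)‖ ^ 2
            - (V (q (k + 1)) + V (q k)) / 2) (q i)
  have hDsum : ∑ k ∈ Finset.range L, D k = D1 + D2 := by
    have hsplit : ∀ k ∈ Finset.range L,
        D k = (if k = i - 1 then D1 else 0) + (if k = i then D2 else 0) := by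
      intro k _
      simp only [hD]
      split_ifs with h1 h2 <;> first | omega | simp
    rw [Finset.sum_congr rfl hsplit, Finset.sum_add_distrib,
      Finset.sum_ite_eq' (Finset.range L) (i - 1) (fun _ => D1),
      Finset.sum_ite_eq' (Finset.range L) i (fun _ => D2)]
    rw [if_pos (by simp; omega), if_pos (by simp; omega)]
  have hg : HasFDerivAt (fun x : EuclideanSpace ℝ (Fin d) =>
      discreteAction V ε L (P x)) (ε • (D1 + D2)) (q i) := by
    have hsum := HasFDerivAt.fun_sum hterm
    have := hsum.const_mul ε
    rw [hDsum] at this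
    exact this
  have hzero : ε • (D1 + D2) = 0 := hmin'.hasFDerivAt_eq_zero hg
  set w : EuclideanSpace ℝ (Fin d) :=
    (2 : ℝ) • q i - q (i - 1) - ε ^ 2 • gradient V (q i) - q (i + 1) with hw
  have happ : (ε • (D1 + D2)) w = 0 := by rw [hzero]; simp
  have hiw : ⟪w, w⟫ = 0 := by
    simp only [ContinuousLinearMap.smul_apply, ContinuousLinearMap.add_apply, hD1, hD2,
      ContinuousLinearMap.sub_apply, innerSL_apply_apply, InnerProductSpace.toDual_apply_apply,
      smul_eq_mul, hDv] at happ
    have hexp : ⟪w, w⟫ = ⟪q i - q (i - 1), w⟫ + ⟪q i - q (i + 1), w⟫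
        - ε ^ 2 * ⟪gradient V (q i), w⟫ := by
      rw [hw]
      simp only [inner_sub_left, real_inner_smul_left, two_smul, inner_add_left]
      ring
    rw [hexp]
    rcases mul_eq_zero.mp happ with h | h
    · exact absurd h hne
    · have hkey : ⟪q i - q (i - 1), w⟫ + ⟪q i - q (i + 1), w⟫
          - ε ^ 2 * ⟪gradient V (q i), w⟫
          = ε ^ 2 * (ε⁻¹ ^ 2 * ⟪q i - q (i - 1), w⟫ - 1 / 2 * ⟪gradient V (q i), w⟫ +
            (ε⁻¹ ^ 2 * ⟪q i - q (i + 1), w⟫ - 1 / 2 * ⟪gradient V (q i), w⟫)) := by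
        generalize ⟪q i - q (i - 1), w⟫ = A
        generalize ⟪q i - q (i + 1), w⟫ = B
        generalize ⟪gradient V (q i), w⟫ = G
        field_simp
        ring
      rw [hkey, h, mul_zero]
  have hw0 : w = 0 := by rwa [inner_self_eq_zero] at hiw
  rw [hw] at hw0
  have hfin : (2 : ℝ) • q i - q (i - 1) - ε ^ 2 • gradient V (q i) = q (i + 1) :=
    sub_eq_zero.mp hw0
  exact hfin.symm
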